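/- For radial u ∈ H^1_{0,rad}(B) with B the unit disk in R^2, if a sequence u_k is bounded in H^1_0 with ‖∇u_k‖_2 ≤ 1 and sup_{r ∈ (0,1)} u_k^*(r)/(1 + log(1/r))^{1/2} → 0, then for every λ > 0, ∫_B (e^{λ u_k^2} − 1) dx → 0. -/

import Mathlib

open MeasureTheory Metric Set Filter
open scoped ENNReal NNReal
set_option maxHeartbeats 1000000

noncomputable abbrev E2 := EuclideanSpace ℝ (Fin 2)

/-- The radial profile `u^*` of the symmetric decreasing rearrangement of `u`:
`u^*(r) = inf { s ≥ 0 : |{|u| > s}| ≤ π r² }`. -/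
noncomputable def rearr (u : E2 → ℝ) (r : ℝ) : ℝ :=
  sInf {s : ℝ | 0 ≤ s ∧ (volume {x : E2 | s < |u x|}).toReal ≤ Real.pi * r ^ 2}

namespace Aux

variable {u : E2 → ℝ}

lemma subset_cball (hsupp : tsupport u ⊆ closedBall (0 : E2) 1) {s : ℝ} (hs : 0 ≤ s) :
    {x : E2 | s < |u x|} ⊆ closedBall (0 : E2) 1 := by
  intro x hx
  apply hsupp
  apply subset_tsupport
  simp only [Function.mem_support]
  intro h0
  simp only [mem_setOf_eq, h0, abs_zero] at hx
  exact absurd hx (not_lt.2 hs)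

lemma vol_ne_top (hsupp : tsupport u ⊆ closedBall (0 : E2) 1) {s : ℝ} (hs : 0 ≤ s) :
    volume {x : E2 | s < |u x|} ≠ ⊤ :=
  ((measure_mono (subset_cball hsupp hs)).trans_lt (measure_closedBall_lt_top)).ne

lemma exists_small (hm : Measurable u) (hsupp : tsupport u ⊆ closedBall (0 : E2) 1)
    {c : ℝ} (hc : 0 < c) :
    ∃ t : ℝ, 0 ≤ t ∧ (volume {x : E2 | t < |u x|}).toReal ≤ c := by
  have h1 : ∀ n : ℕ, NullMeasurableSet {x : E2 | (n : ℝ) < |u x|} volume := fun n =>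
    (measurableSet_lt measurable_const hm.abs).nullMeasurableSet
  have h2 : Antitone fun n : ℕ => {x : E2 | (n : ℝ) < |u x|} := by
    intro m n hmn x hx
    simp only [mem_setOf_eq] at hx ⊢
    exact lt_of_le_of_lt (by exact_mod_cast hmn) hx
  have h3 : ⋂ n : ℕ, {x : E2 | (n : ℝ) < |u x|} = ∅ := by
    ext x
    simp only [mem_iInter, mem_setOf_eq, mem_empty_iff_false, iff_false, not_forall, not_lt]
    obtain ⟨n, hn⟩ := exists_nat_ge |u x|
    exact ⟨n, hn⟩
  have h4 : Tendsto (volume ∘ fun n : ℕ => {x : E2 | (n : ℝ) < |u x|}) atTop (nhds 0) := by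
    have := tendsto_measure_iInter_atTop (μ := volume) h1 h2
      ⟨0, vol_ne_top hsupp (by norm_num)⟩
    rwa [h3, measure_empty] at this
  have h5 : ∀ᶠ n : ℕ in atTop, (volume ∘ fun n : ℕ => {x : E2 | (n : ℝ) < |u x|}) n
      < ENNReal.ofReal c := h4.eventually_lt_const (by simpa using hc)
  obtain ⟨n, hn⟩ := h5.exists
  exact ⟨n, Nat.cast_nonneg n, ENNReal.toReal_le_of_le_ofReal hc.le hn.le⟩

lemma rearr_nonneg (u : E2 → ℝ) (r : ℝ) : 0 ≤ rearr u r :=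
  Real.sInf_nonneg fun _ hx => hx.1

lemma rearr_set_nonempty (hm : Measurable u) (hsupp : tsupport u ⊆ closedBall (0 : E2) 1)
    {r : ℝ} (hr : 0 < r) :
    {s : ℝ | 0 ≤ s ∧ (volume {x : E2 | s < |u x|}).toReal ≤ Real.pi * r ^ 2}.Nonempty := by
  obtain ⟨t, ht0, ht⟩ := exists_small hm hsupp (by positivity : (0:ℝ) < Real.pi * r ^ 2)
  exact ⟨t, ht0, ht⟩

/-- If `rearr u r < b` then the measure of `{|u| > b}` is at most `π r²`. -/
lemma distr_le_of_rearr_lt (hm : Measurable u) (hsupp : tsupport u ⊆ closedBall (0 : E2) 1)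
    {r b : ℝ} (hr : 0 < r) (hb : rearr u r < b) :
    (volume {x : E2 | b < |u x|}).toReal ≤ Real.pi * r ^ 2 := by
  obtain ⟨t, ⟨ht0, ht⟩, htb⟩ := exists_lt_of_csInf_lt (rearr_set_nonempty hm hsupp hr) hb
  refine le_trans ?_ ht
  apply ENNReal.toReal_mono (vol_ne_top hsupp ht0)
  exact measure_mono fun x hx => lt_trans htb hx

/-- If `s < rearr u r` with `s ≥ 0` then the measure of `{|u| > s}` exceeds `π r²`. -/
lemma lt_distr_of_lt_rearr {s r : ℝ} (hs : 0 ≤ s) (hlt : s < rearr u r) :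
    Real.pi * r ^ 2 < (volume {x : E2 | s < |u x|}).toReal := by
  by_contra h
  push_neg at h
  have : rearr u r ≤ s := csInf_le ⟨0, fun x hx => hx.1⟩ ⟨hs, h⟩
  exact absurd hlt (not_lt.2 this)


/-- Key distribution-function estimate. -/
lemma distr_bound (hm : Measurable u) (hsupp : tsupport u ⊆ closedBall (0 : E2) 1)
    {eps : ℝ} (heps : 0 < eps)
    (hb : ∀ r ∈ Ioo (0:ℝ) 1, rearr u r ≤ eps * Real.sqrt (1 + Real.log (1/r)))
    {s : ℝ} (hs : eps < s) :
    (volume {x : E2 | s < |u x|}).toReal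
      ≤ Real.pi * Real.exp 1 ^ 2 * Real.exp (-2 * s ^ 2 / eps ^ 2) := by
  set F : ℝ → ℝ := fun t => Real.pi * Real.exp 1 ^ 2 * Real.exp (-2 * t ^ 2 / eps ^ 2) with hF
  have hcont : Tendsto F (nhdsWithin s (Iio s)) (nhds (F s)) := by
    apply (Continuous.tendsto (by fun_prop) s).mono_left nhdsWithin_le_nhds
  refine ge_of_tendsto hcont ?_
  filter_upwards [Ioo_mem_nhdsLT_of_mem (⟨hs, le_rfl⟩ : s ∈ Ioc eps s)] with t ht
  -- t ∈ Ioo eps s; show vol ≤ F t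
  obtain ⟨hεt, hts⟩ := ht
  have ht0 : 0 < t := heps.trans hεt
  set L : ℝ := t ^ 2 / eps ^ 2 - 1 with hL
  have hL0 : 0 < L := by
    have : 1 < t ^ 2 / eps ^ 2 := by
      rw [lt_div_iff₀ (by positivity)]
      rw [one_mul]
      exact pow_lt_pow_left₀ hεt heps.le two_ne_zero
    simpa [hL] using sub_pos.2 this
  set r : ℝ := Real.exp (-L) with hr
  have hrI : r ∈ Ioo (0:ℝ) 1 := ⟨Real.exp_pos _, by
    rw [hr, Real.exp_lt_one_iff]; linarith⟩
  have hlog : Real.log (1 / r) = L := by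
    rw [one_div, Real.log_inv, hr, Real.log_exp, neg_neg]
  have hsqrt : eps * Real.sqrt (1 + Real.log (1/r)) = t := by
    rw [hlog]
    have h1 : 1 + L = t ^ 2 / eps ^ 2 := by ring
    rw [h1]
    rw [show t ^ 2 / eps ^ 2 = (t / eps) ^ 2 by ring]
    rw [Real.sqrt_sq (by positivity)]
    field_simp
  have hre : rearr u r < s := by
    calc rearr u r ≤ eps * Real.sqrt (1 + Real.log (1/r)) := hb r hrI
    _ = t := hsqrt
    _ < s := hts
  have := distr_le_of_rearr_lt hm hsupp hrI.1 hre
  refine this.trans ?_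
  have hr2 : r ^ 2 = Real.exp (-2 * L) := by
    rw [hr, ← Real.exp_nat_mul]
    norm_num
  rw [hr2, hF]
  have : Real.exp (-2 * L) = Real.exp 1 ^ 2 * Real.exp (-2 * t ^ 2 / eps ^ 2) := by
    rw [← Real.exp_nat_mul]
    rw [← Real.exp_add]
    congr 1
    rw [hL]
    field_simp
    ring
  rw [this]
  ring_nf
  exact le_rfl

/-- If all rearrangement values are `≤ 0`, then `u = 0` a.e. -/
lemma ae_zero_of_rearr_le (hm : Measurable u) (hsupp : tsupport u ⊆ closedBall (0 : E2) 1)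
    (hb : ∀ r ∈ Ioo (0:ℝ) 1, rearr u r ≤ 0) : u =ᵐ[volume] 0 := by
  have key : ∀ s : ℝ, 0 < s → volume {x : E2 | s < |u x|} = 0 := by
    intro s hs
    have h1 : ∀ n : ℕ, volume {x : E2 | s < |u x|} ≤ ENNReal.ofReal (Real.pi * (1/(n+2):ℝ)^2) := by
      intro n
      have hrI : (1/(n+2):ℝ) ∈ Ioo (0:ℝ) 1 := by
        constructor
        · positivity
        · rw [div_lt_one (by positivity)]
          have : (1:ℝ) ≤ (n:ℝ) + 1 := by
            have := Nat.cast_nonneg (α := ℝ) n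
            linarith
          linarith
      have := distr_le_of_rearr_lt hm hsupp hrI.1 (lt_of_le_of_lt (hb _ hrI) hs)
      exact (ENNReal.le_ofReal_iff_toReal_le (vol_ne_top hsupp hs.le) (by positivity)).2 this
    have h2 : Tendsto (fun n : ℕ => ENNReal.ofReal (Real.pi * (1/(n+2):ℝ)^2)) atTop (nhds 0) := by
      have hx : Tendsto (fun n : ℕ => (1/(n+2):ℝ)) atTop (nhds 0) := by
        simp only [one_div]
        apply Tendsto.inv_tendsto_atTop
        apply tendsto_atTop_add_const_right
        exact tendsto_natCast_atTop_atTop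
      have hc : Tendsto (fun x : ℝ => ENNReal.ofReal (Real.pi * x^2)) (nhds 0) (nhds 0) := by
        rw [show (0:ℝ≥0∞) = ENNReal.ofReal (Real.pi * 0^2) by simp]
        exact (ENNReal.continuous_ofReal.tendsto _).comp
          ((continuous_const.mul (continuous_pow 2)).tendsto 0)
      have := hc.comp hx
      simpa [Function.comp_def] using this
    exact le_antisymm (ge_of_tendsto h2 (Eventually.of_forall h1)) zero_le
  have hsub : {x : E2 | u x ≠ 0} ⊆ ⋃ n : ℕ, {x : E2 | 1/(n+1) < |u x|} := by
    intro x hx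
    obtain ⟨n, hn⟩ := exists_nat_one_div_lt (abs_pos.2 hx)
    exact mem_iUnion.2 ⟨n, hn⟩
  have : volume {x : E2 | u x ≠ 0} = 0 := by
    apply measure_mono_null hsub
    exact measure_iUnion_null fun n => key _ (by positivity)
  rw [Filter.EventuallyEq, ae_iff]
  simpa using this


lemma vol_ball2 : volume (ball (0:E2) 1) = ENNReal.ofReal Real.pi := by
  rw [EuclideanSpace.volume_ball]
  rw [Fintype.card_fin]
  rw [show ((2:ℕ):ℝ) / 2 + 1 = 2 by norm_num]
  rw [Real.Gamma_two, Real.sq_sqrt Real.pi_nonneg]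
  simp

lemma vol_sphere2 : volume (sphere (0:E2) 1) = 0 :=
  MeasureTheory.Measure.addHaar_sphere volume _ _

lemma meas_f (hm : Measurable u) (lam : ℝ) :
    Measurable fun x => Real.exp (lam * u x ^ 2) - 1 :=
  ((measurable_const.mul (hm.pow_const 2)).exp).sub measurable_const

lemma repr1 (hm : Measurable u) (lam : ℝ) (hlam : 0 < lam) :
    ∫ x in ball (0:E2) 1, (Real.exp (lam * u x ^ 2) - 1)
      = (∫⁻ x in ball (0:E2) 1, ENNReal.ofReal (Real.exp (lam * u x ^ 2) - 1)).toReal := by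
  apply integral_eq_lintegral_of_nonneg_ae
  · apply Eventually.of_forall
    intro x
    simp only [Pi.zero_apply, sub_nonneg, Real.one_le_exp_iff]
    positivity
  · exact (meas_f hm lam).aestronglyMeasurable

lemma repr2 (hm : Measurable u) (lam : ℝ) (hlam : 0 < lam) :
    ∫⁻ x in ball (0:E2) 1, ENNReal.ofReal (Real.exp (lam * u x ^ 2) - 1)
      = ∫⁻ t in Ioi (0:ℝ),
          (volume.restrict (ball (0:E2) 1)) {x | t < Real.exp (lam * u x ^ 2) - 1} := by
  apply lintegral_eq_lintegral_meas_lt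
  · apply Eventually.of_forall
    intro x
    simp only [Pi.zero_apply, sub_nonneg, Real.one_le_exp_iff]
    positivity
  · exact (meas_f hm lam).aemeasurable

lemma set_eq (lam : ℝ) (hlam : 0 < lam) {t : ℝ} (ht : 0 < t) :
    {x : E2 | t < Real.exp (lam * u x ^ 2) - 1}
      = {x : E2 | Real.sqrt (Real.log (1+t) / lam) < |u x|} := by
  ext x
  simp only [mem_setOf_eq]
  rw [lt_sub_iff_add_lt', ← Real.log_lt_iff_lt_exp (show (0:ℝ) < 1 + t by linarith)]
  rw [← Real.sqrt_sq_eq_abs, Real.sqrt_lt_sqrt_iff (div_nonneg (Real.log_nonneg (by linarith)) hlam.le), div_lt_iff₀ hlam,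
    mul_comm]


lemma main_bound (hm : Measurable u) (hsupp : tsupport u ⊆ closedBall (0 : E2) 1)
    {lam eps : ℝ} (hlam : 0 < lam) (heps : 0 < eps) (hle2 : lam * eps ^ 2 < 2)
    (hb : ∀ r ∈ Ioo (0:ℝ) 1, rearr u r ≤ eps * Real.sqrt (1 + Real.log (1/r))) :
    ∫ x in ball (0:E2) 1, (Real.exp (lam * u x ^ 2) - 1)
      ≤ Real.pi * (Real.exp (lam * eps ^ 2) - 1)
        + Real.pi * Real.exp 1 ^ 2 * (lam * eps ^ 2) / (2 - lam * eps ^ 2) := by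
  have hle0 : 0 < lam * eps ^ 2 := by positivity
  set t0 : ℝ := Real.exp (lam * eps ^ 2) - 1 with ht0def
  have ht0 : 0 < t0 := by
    simp only [ht0def, sub_pos]
    exact Real.one_lt_exp_iff.2 hle0
  set q : ℝ := 2 / (lam * eps ^ 2) with hqdef
  have hq : 1 < q := (one_lt_div hle0).2 hle2
  have hc0 : (0:ℝ) < 1 + t0 := by linarith
  set ν := volume.restrict (ball (0:E2) 1) with hν
  -- pointwise bound for t > t0
  have hpt : ∀ t ∈ Ioi t0, ν {x : E2 | t < Real.exp (lam * u x ^ 2) - 1}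
      ≤ ENNReal.ofReal (Real.pi * Real.exp 1 ^ 2 * (1 + t) ^ (-q)) := by
    intro t ht
    rw [mem_Ioi] at ht
    have htpos : 0 < t := ht0.trans ht
    have hlogt : lam * eps ^ 2 < Real.log (1 + t) := by
      have : Real.log (1 + t0) < Real.log (1 + t) := Real.log_lt_log hc0 (by linarith)
      rwa [ht0def, show (1:ℝ) + (Real.exp (lam * eps ^ 2) - 1) = Real.exp (lam * eps ^ 2) by ring,
        Real.log_exp] at this
    set s : ℝ := Real.sqrt (Real.log (1 + t) / lam) with hsdef
    have hseps : eps < s := by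
      rw [hsdef, show eps = Real.sqrt (eps ^ 2) from (Real.sqrt_sq heps.le).symm]
      apply Real.sqrt_lt_sqrt (sq_nonneg _)
      rw [lt_div_iff₀ hlam]
      linarith [mul_comm lam (eps ^ 2)]
    have hs2 : s ^ 2 = Real.log (1 + t) / lam := Real.sq_sqrt
      (div_nonneg (Real.log_nonneg (by linarith)) hlam.le)
    calc ν {x : E2 | t < Real.exp (lam * u x ^ 2) - 1}
        ≤ volume {x : E2 | t < Real.exp (lam * u x ^ 2) - 1} := Measure.restrict_le_self _
      _ = volume {x : E2 | s < |u x|} := by rw [set_eq lam hlam htpos]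
      _ ≤ ENNReal.ofReal (Real.pi * Real.exp 1 ^ 2 * (1 + t) ^ (-q)) := by
          rw [ENNReal.le_ofReal_iff_toReal_le (vol_ne_top hsupp (heps.le.trans hseps.le))
            (by positivity)]
          refine (distr_bound hm hsupp heps hb hseps).trans ?_
          have hexp : Real.exp (-2 * s ^ 2 / eps ^ 2) = (1 + t) ^ (-q) := by
            rw [Real.rpow_def_of_pos (by linarith : (0:ℝ) < 1 + t)]
            congr 1
            rw [hs2, hqdef]
            field_simp
          rw [hexp]
    -- done
  -- the lintegral identity
  have hI : ∫⁻ x in ball (0:E2) 1, ENNReal.ofReal (Real.exp (lam * u x ^ 2) - 1)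
      = (∫⁻ t in Ioc 0 t0, ν {x : E2 | t < Real.exp (lam * u x ^ 2) - 1})
        + ∫⁻ t in Ioi t0, ν {x : E2 | t < Real.exp (lam * u x ^ 2) - 1} := by
    rw [repr2 hm lam hlam, ← Ioc_union_Ioi_eq_Ioi ht0.le,
      lintegral_union measurableSet_Ioi (Ioc_disjoint_Ioi le_rfl), hν]
  -- part 1
  have hpart1 : ∫⁻ t in Ioc 0 t0, ν {x : E2 | t < Real.exp (lam * u x ^ 2) - 1}
      ≤ ENNReal.ofReal (Real.pi * t0) := by
    calc ∫⁻ t in Ioc 0 t0, ν {x : E2 | t < Real.exp (lam * u x ^ 2) - 1}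
        ≤ ∫⁻ _ in Ioc 0 t0, ENNReal.ofReal Real.pi := by
          apply lintegral_mono
          intro t
          calc ν {x : E2 | t < Real.exp (lam * u x ^ 2) - 1} ≤ ν univ :=
                measure_mono (subset_univ _)
            _ = ENNReal.ofReal Real.pi := by
                rw [hν, Measure.restrict_apply_univ, vol_ball2]
      _ = ENNReal.ofReal Real.pi * volume (Ioc (0:ℝ) t0) := setLIntegral_const _ _
      _ = ENNReal.ofReal (Real.pi * t0) := by
          rw [Real.volume_Ioc, sub_zero, ← ENNReal.ofReal_mul Real.pi_nonneg]
  -- part 2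
  have hpart2 : ∫⁻ t in Ioi t0, ν {x : E2 | t < Real.exp (lam * u x ^ 2) - 1}
      ≤ ENNReal.ofReal (Real.pi * Real.exp 1 ^ 2 * (lam * eps ^ 2) / (2 - lam * eps ^ 2)) := by
    have hmp : MeasurePreserving (fun t : ℝ => 1 + t) volume volume :=
      measurePreserving_add_left volume 1
    have hemb : MeasurableEmbedding (fun t : ℝ => 1 + t) :=
      (Homeomorph.addLeft (1:ℝ)).measurableEmbedding
    have hpre : (fun t : ℝ => 1 + t) ⁻¹' Ioi (1 + t0) = Ioi t0 := by
      ext t; simp [add_lt_add_iff_left]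
    have hint : IntegrableOn (fun y : ℝ => Real.pi * Real.exp 1 ^ 2 * y ^ (-q)) (Ioi (1 + t0)) :=
      (integrableOn_Ioi_rpow_of_lt (by linarith) hc0).const_mul _
    have hnn : 0 ≤ᵐ[volume.restrict (Ioi (1 + t0))]
        fun y : ℝ => Real.pi * Real.exp 1 ^ 2 * y ^ (-q) := by
      rw [EventuallyLE, ae_restrict_iff' measurableSet_Ioi]
      apply Eventually.of_forall
      intro y hy
      have hy0 : (0:ℝ) < y := hc0.trans hy
      have := Real.rpow_nonneg hy0.le (-q)
      positivity
    calc ∫⁻ t in Ioi t0, ν {x : E2 | t < Real.exp (lam * u x ^ 2) - 1}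
        ≤ ∫⁻ t in Ioi t0, ENNReal.ofReal (Real.pi * Real.exp 1 ^ 2 * (1 + t) ^ (-q)) := by
          apply setLIntegral_mono (by fun_prop) hpt
      _ = ∫⁻ y in Ioi (1 + t0), ENNReal.ofReal (Real.pi * Real.exp 1 ^ 2 * y ^ (-q)) := by
          rw [← hpre]
          exact hmp.setLIntegral_comp_preimage_emb hemb
            (fun y => ENNReal.ofReal (Real.pi * Real.exp 1 ^ 2 * y ^ (-q))) _
      _ = ENNReal.ofReal (∫ y in Ioi (1 + t0), Real.pi * Real.exp 1 ^ 2 * y ^ (-q)) :=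
          (ofReal_integral_eq_lintegral_ofReal hint hnn).symm
      _ ≤ ENNReal.ofReal (Real.pi * Real.exp 1 ^ 2 * (lam * eps ^ 2) / (2 - lam * eps ^ 2)) := by
          apply ENNReal.ofReal_le_ofReal
          rw [integral_const_mul, integral_Ioi_rpow_of_lt (by linarith) hc0]
          have hval : -(1 + t0) ^ (-q + 1) / (-q + 1) = (1 + t0) ^ (1 - q) / (q - 1) := by
            rw [show -q + 1 = 1 - q by ring]
            rw [show (1:ℝ) - q = -(q - 1) by ring]
            rw [div_neg, neg_div, neg_neg]
          rw [hval]
          have hple : (1 + t0) ^ (1 - q) ≤ 1 :=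
            Real.rpow_le_one_of_one_le_of_nonpos (by linarith) (by linarith)
          have hq1 : 0 < q - 1 := by linarith
          have h1q : q - 1 = (2 - lam * eps ^ 2) / (lam * eps ^ 2) := by
            rw [hqdef]; field_simp
          calc Real.pi * Real.exp 1 ^ 2 * ((1 + t0) ^ (1 - q) / (q - 1))
              ≤ Real.pi * Real.exp 1 ^ 2 * (1 / (q - 1)) := by
                gcongr
              _ = Real.pi * Real.exp 1 ^ 2 * (lam * eps ^ 2) / (2 - lam * eps ^ 2) := by
                rw [h1q, one_div_div]; ring
  -- combine
  have h2nn : (0:ℝ) ≤ Real.pi * Real.exp 1 ^ 2 * (lam * eps ^ 2) / (2 - lam * eps ^ 2) :=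
    div_nonneg (by positivity) (by linarith)
  have hsum : ∫⁻ x in ball (0:E2) 1, ENNReal.ofReal (Real.exp (lam * u x ^ 2) - 1)
      ≤ ENNReal.ofReal (Real.pi * t0
          + Real.pi * Real.exp 1 ^ 2 * (lam * eps ^ 2) / (2 - lam * eps ^ 2)) := by
    rw [hI, ENNReal.ofReal_add (by positivity) h2nn]
    exact add_le_add hpart1 hpart2
  rw [repr1 hm lam hlam]
  exact ENNReal.toReal_le_of_le_ofReal (add_nonneg (by positivity) h2nn) hsum


lemma integral_zero_of_ae (lam : ℝ) (h0 : u =ᵐ[volume] 0) :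
    ∫ x in ball (0:E2) 1, (Real.exp (lam * u x ^ 2) - 1) = 0 := by
  have h : (fun x => Real.exp (lam * u x ^ 2) - 1)
      =ᵐ[volume.restrict (ball (0:E2) 1)] 0 := by
    filter_upwards [ae_restrict_of_ae h0] with x hx
    simp only [Pi.zero_apply] at hx ⊢
    simp [hx]
  rw [integral_congr_ae h]
  simp

lemma junk_case (hm : Measurable u) (hsupp : tsupport u ⊆ closedBall (0:E2) 1)
    {lam : ℝ} (hlam : 0 < lam)
    (hnb : ¬ BddAbove (range fun r : Ioo (0:ℝ) 1 =>
      rearr u (r:ℝ) / Real.sqrt (1 + Real.log (1/(r:ℝ))))) :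
    ∫ x in ball (0:E2) 1, (Real.exp (lam * u x ^ 2) - 1) = 0 := by
  rw [repr1 hm lam hlam]
  suffices h : (∫⁻ x in ball (0:E2) 1, ENNReal.ofReal (Real.exp (lam * u x ^ 2) - 1)) = ⊤ by
    rw [h]; rfl
  by_contra hne
  obtain ⟨n, hn⟩ := ENNReal.exists_nat_gt hne
  set M : ℝ := Real.sqrt (2/lam) + Real.sqrt (n/lam) with hM
  have hM0 : 0 ≤ M := by positivity
  have hlamM : (n:ℝ) + 2 ≤ lam * M ^ 2 := by
    have h1 : Real.sqrt (2/lam) ^ 2 = 2/lam := Real.sq_sqrt (by positivity)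
    have h2 : Real.sqrt ((n:ℝ)/lam) ^ 2 = (n:ℝ)/lam := Real.sq_sqrt (by positivity)
    have h3 : Real.sqrt (2/lam) ^ 2 + Real.sqrt ((n:ℝ)/lam) ^ 2
        ≤ (Real.sqrt (2/lam) + Real.sqrt ((n:ℝ)/lam)) ^ 2 := by
      nlinarith [Real.sqrt_nonneg (2/lam), Real.sqrt_nonneg ((n:ℝ)/lam)]
    rw [h1, h2] at h3
    rw [hM]
    have h4 : 2/lam + (n:ℝ)/lam = (2 + n)/lam := by ring
    rw [h4] at h3
    have h5 : lam * ((2 + (n:ℝ))/lam) = 2 + (n:ℝ) := by field_simp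
    nlinarith [mul_le_mul_of_nonneg_left h3 hlam.le]
  obtain ⟨y, hymem, hMy⟩ := not_bddAbove_iff.1 hnb M
  obtain ⟨r0, rfl⟩ := hymem
  set R : ℝ := (r0 : ℝ) with hRdef
  have hR : R ∈ Ioo (0:ℝ) 1 := r0.2
  have hL0 : 0 ≤ Real.log (1/R) :=
    Real.log_nonneg (one_le_one_div hR.1 hR.2.le)
  set L : ℝ := Real.log (1/R) with hLdef
  have hW0 : 0 < Real.sqrt (1 + L) := Real.sqrt_pos.2 (by linarith)
  set W : ℝ := Real.sqrt (1 + L) with hWdef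
  have hs : M * W < rearr u R := (lt_div_iff₀ hW0).1 hMy
  set sv : ℝ := M * W with hsv
  have hsv0 : 0 ≤ sv := mul_nonneg hM0 hW0.le
  have h5 : Real.pi * R ^ 2 < (volume {x : E2 | sv < |u x|}).toReal :=
    lt_distr_of_lt_rearr hsv0 hs
  set A : Set E2 := {x : E2 | sv < |u x|} with hA
  have hAm : MeasurableSet A := measurableSet_lt measurable_const hm.abs
  have hAtop : volume A ≠ ⊤ := vol_ne_top hsupp hsv0
  -- ofReal (π R²) ≤ ν A
  have hνA : ENNReal.ofReal (Real.pi * R ^ 2) ≤ (volume.restrict (ball (0:E2) 1)) A := by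
    have hsub2 : A ⊆ (A ∩ ball (0:E2) 1) ∪ sphere (0:E2) 1 := by
      intro x hx
      have hxc : x ∈ closedBall (0:E2) 1 := subset_cball hsupp hsv0 hx
      rw [← ball_union_sphere] at hxc
      rcases hxc with h | h
      · exact Or.inl ⟨hx, h⟩
      · exact Or.inr h
    have : volume A ≤ volume (A ∩ ball (0:E2) 1) := by
      calc volume A ≤ volume ((A ∩ ball (0:E2) 1) ∪ sphere (0:E2) 1) := measure_mono hsub2
        _ ≤ volume (A ∩ ball (0:E2) 1) + volume (sphere (0:E2) 1) := measure_union_le _ _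
        _ = volume (A ∩ ball (0:E2) 1) := by rw [vol_sphere2, add_zero]
    rw [Measure.restrict_apply hAm]
    refine le_trans ?_ this
    calc ENNReal.ofReal (Real.pi * R ^ 2) ≤ ENNReal.ofReal ((volume A).toReal) :=
          ENNReal.ofReal_le_ofReal h5.le
      _ = volume A := ENNReal.ofReal_toReal hAtop
  -- lower bound on the lintegral
  have hlow : ENNReal.ofReal (Real.exp (lam * sv ^ 2) - 1) * ENNReal.ofReal (Real.pi * R ^ 2)
      ≤ ∫⁻ x in ball (0:E2) 1, ENNReal.ofReal (Real.exp (lam * u x ^ 2) - 1) := by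
    calc ENNReal.ofReal (Real.exp (lam * sv ^ 2) - 1) * ENNReal.ofReal (Real.pi * R ^ 2)
        ≤ ENNReal.ofReal (Real.exp (lam * sv ^ 2) - 1)
            * (volume.restrict (ball (0:E2) 1)) A := by gcongr
      _ = ∫⁻ _ in A, ENNReal.ofReal (Real.exp (lam * sv ^ 2) - 1)
            ∂(volume.restrict (ball (0:E2) 1)) := (setLIntegral_const _ _).symm
      _ ≤ ∫⁻ x in A, ENNReal.ofReal (Real.exp (lam * u x ^ 2) - 1)
            ∂(volume.restrict (ball (0:E2) 1)) := by
          apply setLIntegral_mono ((meas_f hm lam).ennreal_ofReal)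
          intro x hx
          apply ENNReal.ofReal_le_ofReal
          have h6 : sv ^ 2 ≤ u x ^ 2 := by
            rw [← sq_abs (u x)]
            exact pow_le_pow_left₀ hsv0 (le_of_lt hx) 2
          have := Real.exp_le_exp.2 (mul_le_mul_of_nonneg_left h6 hlam.le)
          linarith
      _ ≤ ∫⁻ x in ball (0:E2) 1, ENNReal.ofReal (Real.exp (lam * u x ^ 2) - 1) :=
          setLIntegral_le_lintegral _ _
  -- the real-number inequality
  have hR2 : R ^ 2 = Real.exp (-2 * L) := by
    have hRL : R = Real.exp (-L) := by
      rw [hLdef, one_div, Real.log_inv, neg_neg, Real.exp_log hR.1]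
    rw [hRL, ← Real.exp_nat_mul]
    norm_num
  have hsv2 : sv ^ 2 = M ^ 2 * (1 + L) := by
    rw [hsv, mul_pow, hWdef, Real.sq_sqrt (by linarith : (0:ℝ) ≤ 1 + L)]
  have hreal : (n:ℝ) ≤ (Real.exp (lam * sv ^ 2) - 1) * (Real.pi * R ^ 2) := by
    have e1 : ((n:ℝ) + 2) * (1 + L) ≤ lam * sv ^ 2 := by
      rw [hsv2, ← mul_assoc]
      apply mul_le_mul_of_nonneg_right hlamM (by linarith)
    have e2 : Real.exp (((n:ℝ) + 2) * (1 + L)) ≤ Real.exp (lam * sv ^ 2) := Real.exp_le_exp.2 e1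
    have e3 : (Real.exp (lam * sv ^ 2) - 1) * Real.exp (-2 * L)
        ≥ Real.exp (((n:ℝ) + 2) * (1 + L)) * Real.exp (-2 * L) - Real.exp (-2 * L) := by
      have he : 0 < Real.exp (-2 * L) := Real.exp_pos _
      nlinarith [e2, he]
    have e4 : Real.exp (((n:ℝ) + 2) * (1 + L)) * Real.exp (-2 * L)
        = Real.exp ((n:ℝ) + 2 + (n:ℝ) * L) := by
      rw [← Real.exp_add]
      congr 1
      ring
    have e5 : Real.exp ((n:ℝ) + 2) ≤ Real.exp ((n:ℝ) + 2 + (n:ℝ) * L) := by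
      apply Real.exp_le_exp.2
      have : 0 ≤ (n:ℝ) * L := mul_nonneg (Nat.cast_nonneg n) hL0
      linarith
    have e6 : Real.exp (-2 * L) ≤ 1 := Real.exp_le_one_iff.2 (by linarith)
    have e7 : (n:ℝ) + 3 ≤ Real.exp ((n:ℝ) + 2) := by
      have := Real.add_one_le_exp ((n:ℝ) + 2)
      linarith
    have e8 : (n:ℝ) ≤ (Real.exp (lam * sv ^ 2) - 1) * Real.exp (-2 * L) := by
      rw [e4] at e3
      linarith [e3, e5, e6, e7]
    have e9 : (1:ℝ) ≤ Real.pi := by linarith [Real.pi_gt_three]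
    have e10 : 0 ≤ (Real.exp (lam * sv ^ 2) - 1) := by
      have := Real.add_one_le_exp (lam * sv ^ 2)
      nlinarith [mul_nonneg hlam.le (sq_nonneg sv)]
    calc (n:ℝ) ≤ (Real.exp (lam * sv ^ 2) - 1) * Real.exp (-2 * L) := e8
      _ ≤ Real.pi * ((Real.exp (lam * sv ^ 2) - 1) * Real.exp (-2 * L)) := by
          nlinarith [mul_nonneg e10 (Real.exp_pos (-2*L)).le]
      _ = (Real.exp (lam * sv ^ 2) - 1) * (Real.pi * R ^ 2) := by rw [hR2]; ring
  -- contradiction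
  have hfinal : (n : ℝ≥0∞) ≤ ∫⁻ x in ball (0:E2) 1,
      ENNReal.ofReal (Real.exp (lam * u x ^ 2) - 1) := by
    calc (n : ℝ≥0∞) = ENNReal.ofReal (n:ℝ) := by
          rw [ENNReal.ofReal_natCast]
      _ ≤ ENNReal.ofReal ((Real.exp (lam * sv ^ 2) - 1) * (Real.pi * R ^ 2)) :=
          ENNReal.ofReal_le_ofReal hreal
      _ = ENNReal.ofReal (Real.exp (lam * sv ^ 2) - 1) * ENNReal.ofReal (Real.pi * R ^ 2) := by
          rw [ENNReal.ofReal_mul]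
          have := Real.add_one_le_exp (lam * sv ^ 2)
          nlinarith [mul_nonneg hlam.le (sq_nonneg sv)]
      _ ≤ _ := hlow
  exact absurd hfinal (not_le.2 hn)

end Aux
/-- If `u_k` is bounded in `H^1_0(B)` (`B` the unit disk, `‖∇u_k‖₂ ≤ 1`, radial) and
`sup_{r∈(0,1)} u_k^*(r)/(1 + log(1/r))^{1/2} → 0` (i.e. `u_k → 0` in `exp L²`), then for every
`λ > 0`, `∫_B (e^{λ u_k²} − 1) dx → 0`. -/
theorem expL2_convergence_implies_moser_convergence
    (u : ℕ → E2 → ℝ)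
    (hmeas : ∀ k, Measurable (u k))
    (hsupp : ∀ k, tsupport (u k) ⊆ closedBall (0 : E2) 1)
    (hrad : ∀ k, ∀ x y : E2, ‖x‖ = ‖y‖ → u k x = u k y)
    (henergy : ∀ k, ∫ x in ball (0 : E2) 1, ‖fderiv ℝ (u k) x‖ ^ 2 ≤ 1)
    (hexp : Tendsto
      (fun k => ⨆ r : Set.Ioo (0:ℝ) 1, rearr (u k) r / Real.sqrt (1 + Real.log (1/(r:ℝ))))
      atTop (nhds 0)) :
    ∀ lam > (0:ℝ),
      Tendsto (fun k => ∫ x in ball (0 : E2) 1, (Real.exp (lam * (u k x) ^ 2) - 1))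
        atTop (nhds 0) := by
  intro lam hlam
  set eps : ℕ → ℝ := fun k =>
    ⨆ r : Set.Ioo (0:ℝ) 1, rearr (u k) r / Real.sqrt (1 + Real.log (1/(r:ℝ))) with hepsdef
  set g : ℝ → ℝ := fun e => Real.pi * (Real.exp (lam * e ^ 2) - 1)
      + Real.pi * Real.exp 1 ^ 2 * (lam * e ^ 2) / (2 - lam * e ^ 2) with hg
  have hg0 : g 0 = 0 := by
    rw [hg]
    norm_num
  have hgc : ContinuousAt g 0 := by
    rw [hg]
    apply ContinuousAt.add
    · fun_prop
    · apply ContinuousAt.div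
      · fun_prop
      · fun_prop
      · norm_num
  have hgt : Tendsto (fun k => g (eps k)) atTop (nhds 0) := by
    have := hgc.tendsto.comp hexp
    rwa [hg0] at this
  have hev : ∀ᶠ k in atTop, lam * (eps k) ^ 2 < 2 := by
    have hc2 : Continuous (fun e : ℝ => lam * e ^ 2) := by fun_prop
    have h1 := (hc2.tendsto 0).comp hexp
    simp only [Function.comp_def] at h1
    apply h1.eventually_lt_const
    norm_num
  apply squeeze_zero' (g := fun k => g (eps k)) ?_ ?_ hgt
  · apply Eventually.of_forall
    intro k
    apply integral_nonneg
    intro x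
    simp only [Pi.zero_apply, sub_nonneg, Real.one_le_exp_iff]
    positivity
  · filter_upwards [hev] with k hk
    by_cases hB : BddAbove (range fun r : Set.Ioo (0:ℝ) 1 =>
      rearr (u k) r / Real.sqrt (1 + Real.log (1/(r:ℝ))))
    · -- bounded case
      have hub : ∀ r ∈ Ioo (0:ℝ) 1,
          rearr (u k) r / Real.sqrt (1 + Real.log (1/r)) ≤ eps k := by
        intro r hr
        exact le_ciSup hB ⟨r, hr⟩
      have hW : ∀ r ∈ Ioo (0:ℝ) 1, 0 < Real.sqrt (1 + Real.log (1/r)) := by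
        intro r hr
        apply Real.sqrt_pos.2
        have : 0 ≤ Real.log (1/r) := Real.log_nonneg (one_le_one_div hr.1 hr.2.le)
        linarith
      have heps0 : 0 ≤ eps k := by
        refine le_trans ?_ (hub (1/2) ⟨by norm_num, by norm_num⟩)
        exact div_nonneg (Aux.rearr_nonneg _ _) (Real.sqrt_nonneg _)
      have hball : ∀ r ∈ Ioo (0:ℝ) 1,
          rearr (u k) r ≤ eps k * Real.sqrt (1 + Real.log (1/r)) := by
        intro r hr
        exact (div_le_iff₀ (hW r hr)).1 (hub r hr)
      rcases eq_or_lt_of_le heps0 with h0 | hpos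
      · -- eps k = 0
        have hz : ∀ r ∈ Ioo (0:ℝ) 1, rearr (u k) r ≤ 0 := by
          intro r hr
          have := hball r hr
          rw [← h0, zero_mul] at this
          exact this
        rw [Aux.integral_zero_of_ae lam (Aux.ae_zero_of_rearr_le (hmeas k) (hsupp k) hz)]
        rw [← h0, hg0]
      · calc ∫ x in ball (0:E2) 1, (Real.exp (lam * u k x ^ 2) - 1)
            ≤ Real.pi * (Real.exp (lam * eps k ^ 2) - 1)
              + Real.pi * Real.exp 1 ^ 2 * (lam * eps k ^ 2) / (2 - lam * eps k ^ 2) :=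
            Aux.main_bound (hmeas k) (hsupp k) hlam hpos hk hball
          _ = g (eps k) := by rw [hg]
    · -- unbounded (junk) case
      rw [Aux.junk_case (hmeas k) (hsupp k) hlam hB]
      have hz : eps k = 0 := by
        rw [hepsdef]
        exact Real.iSup_of_not_bddAbove hB
      rw [hz, hg0]
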